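/- arXiv:2505.11693 — 5 statements merged into one kernel-verified Lean document; each statement's English description precedes it below -/
import Mathlib

section
/- For any finite set of arcs E with no two arcs having identical endpoint pairs {min, max}, there exists a proper rope cover: a rope cover R such that no arc in R leans on another arc in R. -/
def amin (a : ℕ × ℕ) : ℕ := min a.1 a.2
def amax (a : ℕ × ℕ) : ℕ := max a.1 a.2
def covers (b a : ℕ × ℕ) : Prop := amin b ≤ amin a ∧ amin a < amax a ∧ amax a ≤ amax b
/-- Arc `a` leans on arc `b` (distinctness is as undirected endpoint pairs). -/
def leansOn (a b : ℕ × ℕ) : Prop :=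
  covers b a ∧ (amin a, amax a) ≠ (amin b, amax b) ∧
    (amin a = amin b ∨ amax a = amax b)
def IsRopeCover (E R : Finset (ℕ × ℕ)) : Prop :=
  R ⊆ E ∧ ∀ a ∈ E \ R, ∃ b ∈ R, leansOn a b
/-- `R` is proper if no arc of `R` leans on another arc of `R`. -/
def IsProper (R : Finset (ℕ × ℕ)) : Prop := ∀ a ∈ R, ∀ b ∈ R, ¬ leansOn a b

lemma leansOn_length {a b : ℕ × ℕ} (h : leansOn a b) :
    amax a - amin a < amax b - amin b := by
  obtain ⟨⟨h1, h2, h3⟩, hne, _⟩ := h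
  have : ¬ (amin a = amin b ∧ amax a = amax b) := by
    rintro ⟨u, v⟩; exact hne (by rw [u, v])
  omega

lemma exists_proper_ropeCover_aux :
    ∀ E : Finset (ℕ × ℕ), (∀ a ∈ E, a.1 ≠ a.2) →
      ∃ R, IsRopeCover E R ∧ IsProper R := by
  classical
  intro E
  induction E using Finset.strongInduction with
  | _ E ih =>
    intro hE
    rcases E.eq_empty_or_nonempty with rfl | hne
    · exact ⟨∅, ⟨Finset.Subset.refl _, by simp⟩, by simp [IsProper]⟩
    · obtain ⟨b, hbE, hbmax⟩ := Finset.exists_max_image E (fun x => amax x - amin x) hne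
      set E' := (E.erase b).filter (fun x => ¬ leansOn x b) with hE'
      have hsub : E' ⊆ E := (Finset.filter_subset _ _).trans (Finset.erase_subset _ _)
      have hss : E' ⊂ E := by
        refine ⟨hsub, fun h => ?_⟩
        have := h hbE
        simp [hE'] at this
      obtain ⟨R', hR'cov, hR'prop⟩ := ih E' hss (fun a ha => hE a (hsub ha))
      refine ⟨insert b R', ⟨?_, ?_⟩, ?_⟩
      · intro x hx
        rcases Finset.mem_insert.mp hx with rfl | hx
        · exact hbE
        · exact hsub (hR'cov.1 hx)
      · intro a ha
        rw [Finset.mem_sdiff, Finset.mem_insert] at ha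
        obtain ⟨haE, hnot⟩ := ha
        push_neg at hnot
        obtain ⟨hab, haR'⟩ := hnot
        by_cases hl : leansOn a b
        · exact ⟨b, Finset.mem_insert_self _ _, hl⟩
        · have haE' : a ∈ E' := by
            simp [hE', Finset.mem_filter, Finset.mem_erase, hab, haE, hl]
          obtain ⟨c, hcR', hlc⟩ := hR'cov.2 a (Finset.mem_sdiff.mpr ⟨haE', haR'⟩)
          exact ⟨c, Finset.mem_insert_of_mem hcR', hlc⟩
      · intro x hx y hy hxy
        have hx' := Finset.mem_insert.mp hx
        have hy' := Finset.mem_insert.mp hy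
        rcases hx' with hxb | hxR
        · subst hxb
          have hyE : y ∈ E := by
            rcases hy' with hyb | hyR
            · subst hyb; exact hbE
            · exact hsub (hR'cov.1 hyR)
          have h1 := leansOn_length hxy
          have h2 := hbmax y hyE
          omega
        · rcases hy' with hyb | hyR
          · subst hyb
            have hxE' : x ∈ E' := hR'cov.1 hxR
            rw [hE', Finset.mem_filter] at hxE'
            exact hxE'.2 hxy
          · exact hR'prop x hxR y hyR hxy

/-- For any finite set of arcs in which no two arcs have identical endpoint pairs,
there exists a proper rope cover. -/
theorem exists_proper_ropeCover (E : Finset (ℕ × ℕ)) (hE : ∀ a ∈ E, a.1 ≠ a.2)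
    (hdist : ∀ a ∈ E, ∀ b ∈ E, amin a = amin b → amax a = amax b → a = b) :
    ∃ R, IsRopeCover E R ∧ IsProper R :=
  exists_proper_ropeCover_aux E hE
end

section
/- In a projective dependency tree, no two distinct arcs cross: there is no pair of arcs (a,b), (c,d) with min(a,b) < min(c,d) < max(a,b) < max(c,d). -/
/-- A dependency tree on nodes `{0, ..., n}`: node 0 has no parent, every other node
has exactly one parent, and the arc relation is acyclic. -/
structure DepTree (n : ℕ) where
  arc : ℕ → ℕ → Prop
  dom : ∀ i j, arc i j → i ≤ n ∧ j ≤ n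
  rootNoParent : ∀ i, ¬ arc i 0
  uniqueParent : ∀ j, 1 ≤ j → j ≤ n → ∃! i, arc i j
  acyclic : ∀ k, ¬ Relation.TransGen arc k k

/-- `k` is a descendant of `i`: there is a directed path of arcs from `i` to `k`. -/
def desc {n : ℕ} (T : DepTree n) (i k : ℕ) : Prop := Relation.ReflTransGen T.arc i k

/-- Projectivity: for each arc `(i,j)`, all nodes strictly between the endpoints
are descendants of `i` or of `j`. -/
def Projective {n : ℕ} (T : DepTree n) : Prop :=
  ∀ i j, T.arc i j → ∀ k, min i j < k → k < max i j → desc T i k ∨ desc T j k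

lemma descOfBetween {n : ℕ} (T : DepTree n) (hproj : Projective T) {i j k : ℕ}
    (h : T.arc i j) (hk1 : min i j < k) (hk2 : k < max i j) : desc T i k := by
  rcases hproj i j h k hk1 hk2 with hk | hk
  · exact hk
  · exact Relation.ReflTransGen.head h hk

lemma parentEq {n : ℕ} (T : DepTree n) {i i' j : ℕ} (h : T.arc i j) (h' : T.arc i' j) :
    i = i' := by
  have hj0 : j ≠ 0 := fun e => T.rootNoParent i (e ▸ h)
  obtain ⟨p, _, hu⟩ := T.uniqueParent j (Nat.one_le_iff_ne_zero.mpr hj0) (T.dom i j h).2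
  rw [hu i h, hu i' h']

lemma descStep {n : ℕ} (T : DepTree n) {x c d : ℕ} (h : T.arc c d) (hxd : x ≠ d)
    (hdesc : desc T x d) : desc T x c := by
  have ht : Relation.TransGen T.arc x d :=
    (Relation.reflTransGen_iff_eq_or_transGen.mp hdesc).resolve_left
      (fun e => hxd e.symm)
  obtain ⟨m, hm1, hm2⟩ := Relation.TransGen.tail'_iff.mp ht
  have : m = c := (parentEq T hm2 h).symm ▸ rfl
  exact this ▸ hm1

/-- In a projective dependency tree, no two arcs cross. -/
theorem projective_no_crossing {n : ℕ} (T : DepTree n) (hproj : Projective T)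
    (a b c d : ℕ) (h1 : T.arc a b) (h2 : T.arc c d)
    (hx1 : min a b < min c d) (hx2 : min c d < max a b) (hx3 : max a b < max c d) :
    False := by
  have hap : desc T a (min c d) := descOfBetween T hproj h1 hx1 hx2
  have hcm : desc T c (max a b) := descOfBetween T hproj h2 hx2 hx3
  have hac : desc T a c := by
    rcases min_choice c d with hc | hd
    · exact hc ▸ hap
    · have had : a ≠ d := by
        intro e
        have h3 := min_le_left a b
        have h4 := le_max_left a b
        omega
      exact descStep T h2 had (hd ▸ hap)
  have hca : desc T c a := by
    rcases max_choice a b with ha | hb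
    · exact ha ▸ hcm
    · have hcb : c ≠ b := by
        intro e
        have h3 := min_le_left c d
        have h4 := le_max_left c d
        omega
      exact descStep T h1 hcb (hb ▸ hcm)
  have hne : a ≠ c := by
    intro e
    subst e
    have h3 := min_le_left a b
    have h4 := le_max_left a b
    have h5 := min_le_left a d
    have h6 := le_max_left a d
    have h7 := min_le_right a b
    have h8 := le_max_right a b
    have h9 := min_le_right a d
    have h10 := le_max_right a d
    rcases min_choice a b with e1 | e1 <;> rcases max_choice a b with e2 | e2 <;>
      rcases min_choice a d with e3 | e3 <;> rcases max_choice a d with e4 | e4 <;> omega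
  have t1 : Relation.TransGen T.arc a c :=
    (Relation.reflTransGen_iff_eq_or_transGen.mp hac).resolve_left (fun e => hne e.symm)
  exact T.acyclic a (t1.trans_left hca)
end

section
/- In the rope cover R_4b of a projective dependency tree, obtained by taking for each node its longest outgoing rightward arc and its longest outgoing leftward arc (when they exist), every arc not in R_4b leans on some arc of R_4b; hence R_4b is a rope cover. -/
/-- `(i,j)` is in `R₄b`: it is an arc of `T` which is the longest rightward
(resp. leftward) outgoing arc of its head `i`. -/
def R4b {n : ℕ} (T : DepTree n) (i j : ℕ) : Prop :=
  T.arc i j ∧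
    ((i < j ∧ ∀ k, T.arc i k → i < k → k ≤ j) ∨
     (j < i ∧ ∀ k, T.arc i k → k < i → j ≤ k))

/-- In a projective dependency tree, every arc not in `R₄b` leans on some arc of `R₄b`;
hence `R₄b` is a rope cover. -/
theorem R4b_isRopeCover {n : ℕ} (T : DepTree n) (hproj : Projective T)
    (i j : ℕ) (harc : T.arc i j) (hnot : ¬ R4b T i j) :
    ∃ a b, R4b T a b ∧ leansOn (i, j) (a, b) := by
  classical
  have hij : i ≠ j := by
    rintro rfl
    exact T.acyclic i (Relation.TransGen.single harc)
  rcases lt_or_gt_of_ne hij with h | h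
  · -- i < j : the longest rightward arc of i is strictly longer
    have hfail : ∃ k, T.arc i k ∧ i < k ∧ j < k := by
      by_contra hc
      push_neg at hc
      exact hnot ⟨harc, Or.inl ⟨h, fun k hk hik => hc k hk hik⟩⟩
    obtain ⟨k0, hk0a, hk0i, hk0j⟩ := hfail
    set S := (Finset.range (n + 1)).filter (fun k => T.arc i k ∧ i < k) with hSdef
    have hmem : ∀ k, T.arc i k → i < k → k ∈ S := by
      intro k hk hik
      simp only [hSdef, Finset.mem_filter, Finset.mem_range]
      exact ⟨Nat.lt_succ_of_le (T.dom i k hk).2, hk, hik⟩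
    have hS : S.Nonempty := ⟨k0, hmem k0 hk0a hk0i⟩
    set m := S.max' hS with hm
    have hmS : m ∈ S := S.max'_mem hS
    obtain ⟨-, hma, hmi⟩ :
        m ∈ Finset.range (n + 1) ∧ T.arc i m ∧ i < m := by
      simpa only [hSdef, Finset.mem_filter] using hmS
    have hmax : ∀ k, T.arc i k → i < k → k ≤ m := fun k hk hik =>
      S.le_max' k (hmem k hk hik)
    have hjm : j < m := lt_of_lt_of_le hk0j (hmax k0 hk0a hk0i)
    refine ⟨i, m, ⟨hma, Or.inl ⟨hmi, hmax⟩⟩, ?_⟩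
    simp only [leansOn, covers, amin, amax, ne_eq, Prod.mk.injEq, not_and]
    omega
  · -- j < i : the longest leftward arc of i is strictly longer
    have hfail : ∃ k, T.arc i k ∧ k < i ∧ k < j := by
      by_contra hc
      push_neg at hc
      exact hnot ⟨harc, Or.inr ⟨h, fun k hk hik => hc k hk hik⟩⟩
    obtain ⟨k0, hk0a, hk0i, hk0j⟩ := hfail
    set S := (Finset.range (n + 1)).filter (fun k => T.arc i k ∧ k < i) with hSdef
    have hmem : ∀ k, T.arc i k → k < i → k ∈ S := by
      intro k hk hik
      simp only [hSdef, Finset.mem_filter, Finset.mem_range]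
      exact ⟨Nat.lt_succ_of_le (T.dom i k hk).2, hk, hik⟩
    have hS : S.Nonempty := ⟨k0, hmem k0 hk0a hk0i⟩
    set m := S.min' hS with hm
    have hmS : m ∈ S := S.min'_mem hS
    obtain ⟨-, hma, hmi⟩ :
        m ∈ Finset.range (n + 1) ∧ T.arc i m ∧ m < i := by
      simpa only [hSdef, Finset.mem_filter] using hmS
    have hmin : ∀ k, T.arc i k → k < i → m ≤ k := fun k hk hik =>
      S.min'_le k (hmem k hk hik)
    have hjm : m < j := lt_of_le_of_lt (hmin k0 hk0a hk0i) hk0j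
    refine ⟨i, m, ⟨hma, Or.inr ⟨hmi, hmin⟩⟩, ?_⟩
    simp only [leansOn, covers, amin, amax, ne_eq, Prod.mk.injEq, not_and]
    omega
end

section
/- In the hierarchical bracketing encoding of a projective dependency tree induced by a compact rope cover, no label contains the semibrackets corresponding to outgoing auxiliary arcs toward the covering direction ('\\' left-origin or '/' right-origin semibrackets): i.e., an auxiliary arc always receives its semibracket at the endpoint not shared with its supporting structural arc, and in a projective tree the shared endpoint is always the head-side endpoint of the supporting arc. Formally: in a projective tree, an auxiliary arc cannot lean on a structural arc covered by an arc outgoing from the auxiliary arc's own endpoint — there is no arc (k,l) in the tree and structural arc (i,j) covering it with the node bearing the origin-side semibracket dominating the covering arc. -/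
/-- In a projective dependency tree, a leftward arc `j → i` (with `i < j`) cannot lean
on a covering arc through its left (dependent-side) endpoint `i`: there is no arc
`(a,b)` of the tree, distinct from `(j,i)` as an endpoint pair, covering the span
`(i,j)` and sharing the left endpoint `i`.  (Such a configuration would force the origin
node `j` to dominate the covering arc, which is impossible in a projective tree.)
Consequently, the '\' semibracket never arises for projective trees. -/
theorem no_left_semibracket {n : ℕ} (T : DepTree n) (hproj : Projective T)
    (i j a b : ℕ) (harc : T.arc j i) (hij : i < j)
    (hcov : T.arc a b) (hminshare : min a b = i) (hspan : j ≤ max a b)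
    (hdist : max a b ≠ j) : False := by
  obtain ⟨m, hm⟩ : ∃ m, m = max a b := ⟨_, rfl⟩
  have hjm : j < m := by omega
  -- j is strictly inside the span of (a,b)
  have hd : desc T a j ∨ desc T b j := by
    apply hproj a b hcov j
    · omega
    · omega
  -- i ≠ 0 since it has parent j
  have hi0 : 1 ≤ i := by
    rcases Nat.eq_zero_or_pos i with h | h
    · exact absurd (h ▸ harc) (T.rootNoParent j)
    · exact h
  have cyc : ∀ x, desc T i x → T.arc x i → False := fun x hx hxi =>
    T.acyclic i (Relation.TransGen.tail' hx hxi)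
  -- identify {a,b} = {i,m}
  have hab : (a = i ∧ b = m) ∨ (a = m ∧ b = i) := by omega
  have key : (T.arc i m ∧ (desc T i j ∨ desc T m j)) ∨
      (T.arc m i ∧ (desc T i j ∨ desc T m j)) := by
    rcases hab with ⟨ha, hb⟩ | ⟨ha, hb⟩
    · left; subst ha; subst hb; exact ⟨hcov, hd⟩
    · right; subst ha; subst hb; exact ⟨hcov, hd.symm⟩
  rcases key with ⟨him, hdj⟩ | ⟨hmi, hdj⟩
  · rcases hdj with h | h
    · exact cyc j h harc
    · exact cyc j (Relation.ReflTransGen.head him h) harc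
  · -- m and j are both parents of i, so m = j, contradiction
    have hin : i ≤ n := (T.dom j i harc).2
    obtain ⟨p, _, hp⟩ := T.uniqueParent i hi0 hin
    have := (hp m hmi).trans (hp j harc).symm
    omega
end

section
/- For a projective dependency tree and the proper rope cover R_pr, no node has both an incoming structural arc from the right and an outgoing structural arc to the right, and no node has both an incoming structural arc from the left and an outgoing structural arc to the left. -/
/-- For a projective dependency tree and a proper rope cover `R`, no node has both an
incoming structural arc from the right and an outgoing structural arc to the right,
and no node has both an incoming structural arc from the left and an outgoing
structural arc to the left. -/
theorem proper_ropeCover_no_same_side {n : ℕ} (T : DepTree n) (hproj : Projective T)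
    (R : Finset (ℕ × ℕ))
    (hRarc : ∀ p ∈ R, T.arc p.1 p.2)
    (hcover : ∀ i j, T.arc i j → (i, j) ∉ R → ∃ q ∈ R, leansOn (i, j) q)
    (hproper : ∀ p ∈ R, ∀ q ∈ R, ¬ leansOn p q)
    (v : ℕ) :
    (¬ ∃ u w, (u, v) ∈ R ∧ v < u ∧ (v, w) ∈ R ∧ v < w) ∧
    (¬ ∃ u w, (u, v) ∈ R ∧ u < v ∧ (v, w) ∈ R ∧ w < v) := by
  constructor
  · rintro ⟨u, w, huv, hvu, hvw, hvw2⟩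
    rcases eq_or_ne w u with rfl | hne
    · exact T.acyclic w (Relation.TransGen.head (hRarc _ huv)
        (Relation.TransGen.single (hRarc _ hvw)))
    · rcases lt_or_gt_of_ne hne with h | h
      · have := hproper (v, w) hvw (u, v) huv
        simp [leansOn, covers, amin, amax] at this
        omega
      · have := hproper (u, v) huv (v, w) hvw
        simp [leansOn, covers, amin, amax] at this
        omega
  · rintro ⟨u, w, huv, hvu, hvw, hvw2⟩
    rcases eq_or_ne w u with rfl | hne
    · exact T.acyclic w (Relation.TransGen.head (hRarc _ huv)
        (Relation.TransGen.single (hRarc _ hvw)))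
    · rcases lt_or_gt_of_ne hne with h | h
      · have := hproper (u, v) huv (v, w) hvw
        simp [leansOn, covers, amin, amax] at this
        omega
      · have := hproper (v, w) hvw (u, v) huv
        simp [leansOn, covers, amin, amax] at this
        omega
end
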